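/- Let G be a countable group, H ≤ G a subgroup, and (K_i) a sequence of finite index subgroups of G with finite-to-one left transversals F_i of N_G(K_i). Suppose that for every g ∈ G, the proportion p_i(g) = |{f ∈ F_i : f⁻¹gf ∈ K_i △ H}| / |F_i| tends to 0 as i → ∞. Then for every pair of finite subsets A, B ⊆ G, |(F_i * K_i)(E_{A,B}) - (F_i * H)(E_{A,B})| → 0, where F * L denotes the measure (1/|F|) Σ_{f∈F} δ_{fLf⁻¹} on Sub(G) and E_{A,B} = {L ≤ G : A ⊆ L, B ∩ L = ∅}. -/

import Mathlib

open Filter Topology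

/-- Weiss approximation criterion. Let `K i` be finite index subgroups of `G` with
finite-to-one left transversals `F i` of `N_G(K i)`. If for every `g ∈ G` the
proportion `p_i(g)` of `f ∈ F i` with `f⁻¹gf ∈ K_i △ H` tends to `0`, then for all
finite `A, B ⊆ G` the difference `(F_i * K_i)(E_{A,B}) - (F_i * H)(E_{A,B})` of the
averaged conjugate measures tends to `0`, where
`E_{A,B} = {L ≤ G : A ⊆ L, B ∩ L = ∅}` and `fLf⁻¹ ∈ E_{A,B}` is expressed as
`∀ a ∈ A, f⁻¹af ∈ L` and `∀ b ∈ B, f⁻¹bf ∉ L`. -/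
theorem weiss_approximation_criterion {G : Type*} [Group G] [Countable G]
    (H : Subgroup G) (K : ℕ → Subgroup G) (hK : ∀ i, (K i).FiniteIndex)
    (F : ℕ → Finset G) (hFne : ∀ i, (F i).Nonempty)
    (hFtrans : ∀ i, ∃ k : ℕ, 0 < k ∧ ∀ g : G,
      ({f ∈ (F i : Set G) | g⁻¹ * f ∈ Subgroup.normalizer (K i : Set G)}).ncard = k)
    (hp : ∀ g : G, Tendsto (fun i =>
      (({f ∈ (F i : Set G) |
          Xor' (f⁻¹ * g * f ∈ K i) (f⁻¹ * g * f ∈ H)}).ncard : ℝ) / (F i).card)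
      atTop (𝓝 0)) :
    ∀ A B : Finset G, Tendsto (fun i =>
      |(({f ∈ (F i : Set G) |
            (∀ a ∈ A, f⁻¹ * a * f ∈ K i) ∧ ∀ b ∈ B, f⁻¹ * b * f ∉ K i}).ncard : ℝ) /
          (F i).card -
        (({f ∈ (F i : Set G) |
            (∀ a ∈ A, f⁻¹ * a * f ∈ H) ∧ ∀ b ∈ B, f⁻¹ * b * f ∉ H}).ncard : ℝ) /
          (F i).card|)
      atTop (𝓝 0) := by
  classical
  intro A B
  -- the dominating sequence: sum of the `p i g` over `g ∈ A ∪ B`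
  have hsum : Tendsto (fun i => ∑ g ∈ A ∪ B,
      (({f ∈ (F i : Set G) |
          Xor' (f⁻¹ * g * f ∈ K i) (f⁻¹ * g * f ∈ H)}).ncard : ℝ) / (F i).card)
      atTop (𝓝 0) := by
    have := tendsto_finset_sum (A ∪ B) (fun g _ => hp g)
    simpa using this
  refine squeeze_zero (fun i => abs_nonneg _) (fun i => ?_) hsum
  -- fix i; convert set ncards to finset cards
  set n : ℝ := ((F i).card : ℝ) with hn
  have hnpos : (0:ℝ) < n := by
    rw [hn]; exact_mod_cast Finset.card_pos.2 (hFne i)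
  set SK : Finset G := (F i).filter
    (fun f => (∀ a ∈ A, f⁻¹ * a * f ∈ K i) ∧ ∀ b ∈ B, f⁻¹ * b * f ∉ K i) with hSK
  set SH : Finset G := (F i).filter
    (fun f => (∀ a ∈ A, f⁻¹ * a * f ∈ H) ∧ ∀ b ∈ B, f⁻¹ * b * f ∉ H) with hSH
  set X : G → Finset G := fun g => (F i).filter
    (fun f => Xor' (f⁻¹ * g * f ∈ K i) (f⁻¹ * g * f ∈ H)) with hX
  have eSK : {f ∈ (F i : Set G) |
      (∀ a ∈ A, f⁻¹ * a * f ∈ K i) ∧ ∀ b ∈ B, f⁻¹ * b * f ∉ K i}.ncard = SK.card := by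
    rw [show {f ∈ (F i : Set G) |
      (∀ a ∈ A, f⁻¹ * a * f ∈ K i) ∧ ∀ b ∈ B, f⁻¹ * b * f ∉ K i} = (SK : Set G) by
        ext f; simp [hSK]]
    exact Set.ncard_coe_finset _
  have eSH : {f ∈ (F i : Set G) |
      (∀ a ∈ A, f⁻¹ * a * f ∈ H) ∧ ∀ b ∈ B, f⁻¹ * b * f ∉ H}.ncard = SH.card := by
    rw [show {f ∈ (F i : Set G) |
      (∀ a ∈ A, f⁻¹ * a * f ∈ H) ∧ ∀ b ∈ B, f⁻¹ * b * f ∉ H} = (SH : Set G) by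
        ext f; simp [hSH]]
    exact Set.ncard_coe_finset _
  have eX : ∀ g : G, {f ∈ (F i : Set G) |
      Xor' (f⁻¹ * g * f ∈ K i) (f⁻¹ * g * f ∈ H)}.ncard = (X g).card := by
    intro g
    rw [show {f ∈ (F i : Set G) |
      Xor' (f⁻¹ * g * f ∈ K i) (f⁻¹ * g * f ∈ H)} = ((X g) : Set G) by
        ext f; simp [hX]]
    exact Set.ncard_coe_finset _
  rw [eSK, eSH]
  simp only [eX]
  -- key counting inequality on cardinalities
  have hdiff : ∀ f ∈ (SK \ SH) ∪ (SH \ SK), ∃ g ∈ A ∪ B, f ∈ X g := by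
    intro f hf
    rcases Finset.mem_union.1 hf with hf | hf
    · obtain ⟨hfK, hfH⟩ := Finset.mem_sdiff.1 hf
      obtain ⟨hfF, hK1, hK2⟩ := Finset.mem_filter.1 hfK
      have : ¬ ((∀ a ∈ A, f⁻¹ * a * f ∈ H) ∧ ∀ b ∈ B, f⁻¹ * b * f ∉ H) := by
        intro h; exact hfH (Finset.mem_filter.2 ⟨hfF, h⟩)
      rw [not_and_or] at this
      rcases this with h | h
      · push_neg at h
        obtain ⟨a, ha, haH⟩ := h
        exact ⟨a, Finset.mem_union_left _ ha,
          Finset.mem_filter.2 ⟨hfF, Or.inl ⟨hK1 a ha, haH⟩⟩⟩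
      · push_neg at h
        obtain ⟨b, hb', hbH⟩ := h
        exact ⟨b, Finset.mem_union_right _ hb',
          Finset.mem_filter.2 ⟨hfF, Or.inr ⟨hbH, hK2 b hb'⟩⟩⟩
    · obtain ⟨hfH, hfK⟩ := Finset.mem_sdiff.1 hf
      obtain ⟨hfF, hH1, hH2⟩ := Finset.mem_filter.1 hfH
      have : ¬ ((∀ a ∈ A, f⁻¹ * a * f ∈ K i) ∧ ∀ b ∈ B, f⁻¹ * b * f ∉ K i) := by
        intro h; exact hfK (Finset.mem_filter.2 ⟨hfF, h⟩)
      rw [not_and_or] at this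
      rcases this with h | h
      · push_neg at h
        obtain ⟨a, ha, haK⟩ := h
        exact ⟨a, Finset.mem_union_left _ ha,
          Finset.mem_filter.2 ⟨hfF, Or.inr ⟨hH1 a ha, haK⟩⟩⟩
      · push_neg at h
        obtain ⟨b, hb', hbK⟩ := h
        exact ⟨b, Finset.mem_union_right _ hb',
          Finset.mem_filter.2 ⟨hfF, Or.inl ⟨hbK, hH2 b hb'⟩⟩⟩
  have hsub : (SK \ SH) ∪ (SH \ SK) ⊆ (A ∪ B).biUnion X := by
    intro f hf
    rcases hdiff f hf with ⟨g, hg, hfg⟩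
    exact Finset.mem_biUnion.2 ⟨g, hg, hfg⟩
  have hcard : (Finset.card ((SK \ SH) ∪ (SH \ SK)) : ℝ) ≤ ∑ g ∈ A ∪ B, ((X g).card : ℝ) := by
    calc (Finset.card ((SK \ SH) ∪ (SH \ SK)) : ℝ)
        ≤ (((A ∪ B).biUnion X).card : ℝ) := by
          exact_mod_cast Finset.card_le_card hsub
      _ ≤ ∑ g ∈ A ∪ B, ((X g).card : ℝ) := by
          exact_mod_cast Finset.card_biUnion_le
  have habs : |(SK.card : ℝ) - SH.card| ≤ (Finset.card ((SK \ SH) ∪ (SH \ SK)) : ℝ) := by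
    rw [abs_sub_le_iff]
    constructor
    · have h1 : SK.card ≤ SH.card + (SK \ SH).card := by
        calc SK.card ≤ (SH ∪ (SK \ SH)).card :=
              Finset.card_le_card (fun f hf => by
                by_cases hfh : f ∈ SH
                · exact Finset.mem_union_left _ hfh
                · exact Finset.mem_union_right _ (Finset.mem_sdiff.2 ⟨hf, hfh⟩))
          _ ≤ SH.card + (SK \ SH).card := Finset.card_union_le _ _
      have h2 : (SK \ SH).card ≤ ((SK \ SH) ∪ (SH \ SK)).card :=
        Finset.card_le_card Finset.subset_union_left
      have := h1.trans (Nat.add_le_add_left h2 _)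
      have : (SK.card : ℝ) ≤ SH.card + ((SK \ SH) ∪ (SH \ SK)).card := by exact_mod_cast this
      linarith
    · have h1 : SH.card ≤ SK.card + (SH \ SK).card := by
        calc SH.card ≤ (SK ∪ (SH \ SK)).card :=
              Finset.card_le_card (fun f hf => by
                by_cases hfh : f ∈ SK
                · exact Finset.mem_union_left _ hfh
                · exact Finset.mem_union_right _ (Finset.mem_sdiff.2 ⟨hf, hfh⟩))
          _ ≤ SK.card + (SH \ SK).card := Finset.card_union_le _ _
      have h2 : (SH \ SK).card ≤ ((SK \ SH) ∪ (SH \ SK)).card :=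
        Finset.card_le_card Finset.subset_union_right
      have := h1.trans (Nat.add_le_add_left h2 _)
      have : (SH.card : ℝ) ≤ SK.card + ((SK \ SH) ∪ (SH \ SK)).card := by exact_mod_cast this
      linarith
  have key : |(SK.card : ℝ) - SH.card| ≤ ∑ g ∈ A ∪ B, ((X g).card : ℝ) := habs.trans hcard
  rw [div_sub_div_same, abs_div, abs_of_pos hnpos, ← Finset.sum_div]
  gcongr
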